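/- Let A = lim A_n be an inverse limit of commutative rings with surjective transition maps, I_n the kernel of A → A_n, and N an A-module with N → lim N/(I_n N) bijective (I_•-complete). Then any finitely generated A-submodule M of N is also I_•-complete. -/
import Mathlib


universe u v

variable (A : Type u) [CommRing A] (I : ℕ → Ideal A)
  (M : Type v) [AddCommGroup M] [Module A M]

/-- The inverse limit of the quotients `M/(Iₙ M)`: compatible sequences, where
compatibility of `x (n+1)` and `x n` is expressed by the existence of a common lift
(equivalently, `x (n+1)` maps to `x n` under the canonical map). -/
def LimQuot : Type _ :=
  {x : ∀ n, M ⧸ (I n • ⊤ : Submodule A M) //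
    ∀ n, ∃ m : M,
      (Submodule.Quotient.mk m : M ⧸ (I (n + 1) • ⊤ : Submodule A M)) = x (n + 1) ∧
      (Submodule.Quotient.mk m : M ⧸ (I n • ⊤ : Submodule A M)) = x n}

/-- The natural map `M → lim M/(Iₙ M)`. -/
def toLimQuot : M → LimQuot A I M :=
  fun m => ⟨fun _ => Submodule.Quotient.mk m, fun _ => ⟨m, rfl, rfl⟩⟩

/-- `M` is `I_•`-complete if the natural map `M → lim M/(Iₙ M)` is bijective. -/
def IsIComplete : Prop :=
  Function.Bijective (toLimQuot A I M)

/-- Let `A = lim Aₙ` be the inverse limit of an inverse system of commutative rings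
with surjective transition maps, `Iₙ` the kernel of `A → Aₙ`, and `N` an
`I_•`-complete `A`-module.  Then every finitely generated submodule `M` of `N` is
`I_•`-complete. -/
theorem stmt12 (B : ℕ → Type u) [∀ n, CommRing (B n)]
    (φ : ∀ n, B (n + 1) →+* B n) (hφ : ∀ n, Function.Surjective (φ n))
    (π : ∀ n, A →+* B n)
    (hcompat : ∀ n, (φ n).comp (π (n + 1)) = π n)
    (hinj : ∀ a : A, (∀ n, π n a = 0) → a = 0)
    (hsurj : ∀ x : ∀ n, B n, (∀ n, φ n (x (n + 1)) = x n) → ∃ a : A, ∀ n, π n a = x n)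
    (hI : ∀ n, I n = RingHom.ker (π n))
    (N : Type v) [AddCommGroup N] [Module A N]
    (hN : IsIComplete A I N)
    (M' : Submodule A N) (hM' : M'.FG) :
    IsIComplete A I ↥M' := by
  classical
  have Idec : ∀ n, I (n + 1) ≤ I n := by
    intro n a ha
    rw [hI] at ha ⊢
    have h1 : π n a = (φ n) (π (n + 1) a) := by rw [← hcompat n]; rfl
    rw [RingHom.mem_ker] at ha ⊢
    rw [h1, ha, map_zero]
  -- completeness of A in the form we need
  have hA : ∀ s : ℕ → A, (∀ n, s (n + 1) - s n ∈ I (n + 1)) →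
      ∃ b : A, ∀ n, b - s n ∈ I n := by
    intro s hs
    obtain ⟨a, ha⟩ := hsurj (fun n => π n (s n)) (by
      intro n
      have h1 : (φ n) (π (n + 1) (s (n + 1))) = π n (s (n + 1)) := by
        rw [← hcompat n]; rfl
      have h2 : s (n + 1) - s n ∈ I n := Idec n (hs n)
      rw [hI, RingHom.mem_ker, map_sub, sub_eq_zero] at h2
      simp only [h1, h2])
    exact ⟨a, fun n => by
      rw [hI, RingHom.mem_ker, map_sub, ha n, sub_self]⟩
  -- generators
  obtain ⟨r, g, hg⟩ := Submodule.fg_iff_exists_fin_generating_family.mp hM'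
  have hgmem : ∀ i, g i ∈ M' := fun i => hg ▸ Submodule.subset_span ⟨i, rfl⟩
  set e : Fin r → M' := fun i => ⟨g i, hgmem i⟩ with he
  have hespan : Submodule.span A (Set.range e) = ⊤ := by
    rw [eq_top_iff]
    rintro ⟨x, hx⟩ -
    have hmap : x ∈ Submodule.map M'.subtype (Submodule.span A (Set.range e)) := by
      rw [Submodule.map_span]
      have himg : M'.subtype '' Set.range e = Set.range g := by
        ext y
        constructor
        · rintro ⟨-, ⟨i, rfl⟩, rfl⟩; exact ⟨i, rfl⟩
        · rintro ⟨i, rfl⟩; exact ⟨e i, ⟨i, rfl⟩, rfl⟩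
      rw [himg, hg]; exact hx
    obtain ⟨y, hy, hyx⟩ := hmap
    have : y = ⟨x, hx⟩ := Subtype.ext hyx
    rwa [← this]
  constructor
  · -- injectivity
    intro x y hxy
    have hxy' : ∀ n, (Submodule.Quotient.mk x : M' ⧸ (I n • ⊤ : Submodule A M')) =
        Submodule.Quotient.mk y := fun n => congrArg (fun t => t.1 n) hxy
    have hsub : ∀ n, x - y ∈ (I n • ⊤ : Submodule A M') :=
      fun n => (Submodule.Quotient.eq _).mp (hxy' n)
    have hsubN : ∀ n, (x : N) - (y : N) ∈ (I n • ⊤ : Submodule A N) := by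
      intro n
      have h1 := Submodule.mem_map_of_mem (f := M'.subtype) (hsub n)
      rw [Submodule.map_smul''] at h1
      exact Submodule.smul_mono le_rfl le_top h1
    have h0 : toLimQuot A I N ((x : N) - (y : N)) = toLimQuot A I N 0 := by
      apply Subtype.ext
      funext n
      show (Submodule.Quotient.mk _ : N ⧸ (I n • ⊤ : Submodule A N)) = Submodule.Quotient.mk _
      rw [Submodule.Quotient.eq]
      simpa using hsubN n
    have := hN.1 h0
    rw [sub_eq_zero] at this
    exact Subtype.ext this
  · -- surjectivity
    intro z
    choose c hc1 hc2 using z.2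
    have hd' : ∀ n, c (n + 1) - c n ∈ I (n + 1) • Submodule.span A (Set.range e) := by
      intro n
      rw [hespan, ← Submodule.Quotient.eq]
      rw [hc2 (n + 1), ← hc1 n]
    have hmem := fun n => (Submodule.mem_ideal_smul_span_iff_exists_sum _ _ _).mp (hd' n)
    choose a hamem hasum using hmem
    set α : ℕ → Fin r → A := fun n i => a n i with hα
    have hasum' : ∀ n, (∑ i, α n i • e i) = c (n + 1) - c n := by
      intro n
      rw [← hasum n]
      exact (Finsupp.sum_fintype (a n) (fun i c => c • e i) (fun i => zero_smul A (e i))).symm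
    set S : ℕ → Fin r → A := fun k i => ∑ n ∈ Finset.range k, α n i with hS
    have hb : ∀ i, ∃ b : A, ∀ k, b - S k i ∈ I k := by
      intro i
      apply hA
      intro n
      have h1 : S (n + 1) i - S n i = α n i := by
        simp [hS, Finset.sum_range_succ]
      rw [h1]
      exact hamem n i
    choose b hbk using hb
    refine ⟨c 0 + ∑ i, b i • e i, ?_⟩
    apply Subtype.ext
    funext k
    show (Submodule.Quotient.mk _ : M' ⧸ (I k • ⊤ : Submodule A M')) = z.1 k
    rw [← hc2 k, Submodule.Quotient.eq]
    have hck : c k = c 0 + ∑ i, S k i • e i := by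
      have tel : ∑ n ∈ Finset.range k, (c (n + 1) - c n) = c k - c 0 :=
        Finset.sum_range_sub (fun n => c n) k
      have h2 : ∑ n ∈ Finset.range k, (c (n + 1) - c n) = ∑ i, S k i • e i := by
        simp_rw [← hasum']
        rw [Finset.sum_comm]
        simp [hS, Finset.sum_smul]
      rw [h2] at tel
      rw [tel]
      abel
    rw [hck]
    have h3 : (c 0 + ∑ i, b i • e i) - (c 0 + ∑ i, S k i • e i)
        = ∑ i, (b i - S k i) • e i := by
      simp only [sub_smul]
      rw [Finset.sum_sub_distrib]
      abel
    rw [h3]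
    exact Submodule.sum_mem _ (fun i _ => Submodule.smul_mem_smul (hbk i k) trivial)
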